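/- Let X be a normed space, C ⊆ X nonempty convex, T : C → C nonexpansive, and (λ_n)_{n≥1} ⊆ [0,1] with lim λ_n = 0, ∑ λ_n divergent, and ∑ |λ_{n+1} - λ_n| convergent. If x ∈ C is such that the Halpern iteration (x_n) starting at x is bounded, then lim_{n→∞} ‖x_n - T x_n‖ = 0. -/

import Mathlib

open Filter Finset

/-- Key quantitative lemma: if `a (n+1) ≤ (1 - μ (n+1)) * a n + c n` with `μ n ∈ [0,1]`,
`∑ μ = ∞` and `∑ c < ∞`, `c ≥ 0`, `a ≥ 0`, then `a → 0`. -/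
lemma halpern_aux_tendsto (a c μ : ℕ → ℝ) (ha : ∀ n, 0 ≤ a n)
    (hμ0 : ∀ n, 1 ≤ n → 0 ≤ μ n) (hμ1 : ∀ n, 1 ≤ n → μ n ≤ 1)
    (hrec : ∀ n, a (n + 1) ≤ (1 - μ (n + 1)) * a n + c n)
    (hc0 : ∀ n, 0 ≤ c n) (hc : Summable c)
    (hdiv : Tendsto (fun m => ∑ i ∈ Finset.Ioc 0 m, μ i) atTop atTop) :
    Tendsto a atTop (nhds 0) := by
  rw [Metric.tendsto_atTop]
  intro ε hε
  -- choose N with small tail of c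
  have htail : Tendsto (fun i => ∑' k, c (k + i)) atTop (nhds 0) := tendsto_sum_nat_add c
  obtain ⟨N, hN⟩ : ∃ N, ∑' k, c (k + N) < ε / 2 := by
    have := (htail.eventually (gt_mem_nhds (by linarith : (0:ℝ) < ε / 2))).exists
    exact this
  -- the product
  set P : ℕ → ℝ := fun m => ∏ k ∈ Finset.Ioc N m, (1 - μ k) with hP
  have hPnonneg : ∀ m, 0 ≤ P m := by
    intro m
    refine Finset.prod_nonneg fun k hk => ?_
    have hk1 : 1 ≤ k := Nat.one_le_iff_ne_zero.mpr (by
      have := (Finset.mem_Ioc.mp hk).1; omega)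
    linarith [hμ1 k hk1]
  have hPle : ∀ m, P m ≤ Real.exp (-(∑ k ∈ Finset.Ioc N m, μ k)) := by
    intro m
    rw [← Finset.sum_neg_distrib, Real.exp_sum]
    refine Finset.prod_le_prod (fun k hk => ?_) (fun k hk => ?_)
    · have hk1 : 1 ≤ k := by have := (Finset.mem_Ioc.mp hk).1; omega
      linarith [hμ1 k hk1]
    · have := Real.add_one_le_exp (-μ k)
      linarith
  -- sum Ioc N m tends to atTop
  have hsumIoc : Tendsto (fun m => ∑ k ∈ Finset.Ioc N m, μ k) atTop atTop := by
    have h1 : Tendsto (fun m => (∑ i ∈ Finset.Ioc 0 m, μ i) + -(∑ i ∈ Finset.Ioc 0 N, μ i))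
        atTop atTop := tendsto_atTop_add_const_right _ _ hdiv
    refine Tendsto.congr' ?_ h1
    filter_upwards [eventually_ge_atTop N] with m hm
    have := Finset.sum_Ioc_consecutive μ (Nat.zero_le N) hm
    linarith
  have hPtends : Tendsto P atTop (nhds 0) := by
    refine squeeze_zero hPnonneg hPle ?_
    exact Real.tendsto_exp_atBot.comp (tendsto_neg_atBot_iff.mpr hsumIoc)
  -- main induction
  have key : ∀ m, N ≤ m → a m ≤ P m * a N + ∑ k ∈ Finset.Ico N m, c k := by
    intro m hm
    induction m with
    | zero =>
      simp only [Nat.le_zero] at hm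
      subst hm
      simp [hP]
    | succ m ih =>
      rcases Nat.lt_or_ge N (m + 1) with h | h
      · have hm' : N ≤ m := by omega
        have ihm := ih hm'
        have hμm : 0 ≤ 1 - μ (m + 1) := by linarith [hμ1 (m + 1) (by omega)]
        have hμm' : 1 - μ (m + 1) ≤ 1 := by linarith [hμ0 (m + 1) (by omega)]
        have step := hrec m
        have h2 : (1 - μ (m + 1)) * a m ≤ (1 - μ (m + 1)) * (P m * a N + ∑ k ∈ Finset.Ico N m, c k) :=
          mul_le_mul_of_nonneg_left ihm hμm
        have h3 : (1 - μ (m + 1)) * (P m * a N + ∑ k ∈ Finset.Ico N m, c k)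
            ≤ (1 - μ (m + 1)) * (P m * a N) + ∑ k ∈ Finset.Ico N m, c k := by
          have hsnn : 0 ≤ ∑ k ∈ Finset.Ico N m, c k := Finset.sum_nonneg fun k _ => hc0 k
          nlinarith
        have hPsucc : P (m + 1) = P m * (1 - μ (m + 1)) :=
          Finset.prod_Ioc_succ_top hm' _
        have hSsucc : ∑ k ∈ Finset.Ico N (m + 1), c k = (∑ k ∈ Finset.Ico N m, c k) + c m := by
          rw [Finset.sum_Ico_succ_top hm']
        rw [hPsucc, hSsucc]
        calc a (m + 1) ≤ (1 - μ (m + 1)) * a m + c m := step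
          _ ≤ (1 - μ (m + 1)) * (P m * a N) + (∑ k ∈ Finset.Ico N m, c k) + c m := by linarith
          _ = P m * (1 - μ (m + 1)) * a N + ((∑ k ∈ Finset.Ico N m, c k) + c m) := by ring
      · -- m + 1 = N
        have : m + 1 = N := by omega
        rw [this]
        simp [hP]
  -- bound the partial sums of c by the tail
  have hcsum : ∀ m, ∑ k ∈ Finset.Ico N m, c k ≤ ∑' k, c (k + N) := by
    intro m
    rw [Finset.sum_Ico_eq_sum_range]
    have hs : Summable fun k => c (k + N) := (summable_nat_add_iff N).mpr hc
    calc ∑ k ∈ Finset.range (m - N), c (N + k)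
        = ∑ k ∈ Finset.range (m - N), c (k + N) := by
          refine Finset.sum_congr rfl fun k _ => by ring_nf
      _ ≤ ∑' k, c (k + N) := Summable.sum_le_tsum _ (fun k _ => hc0 _) hs
  -- finish
  have hPa : Tendsto (fun m => P m * a N) atTop (nhds 0) := by
    simpa using hPtends.mul_const (a N)
  obtain ⟨M, hM⟩ : ∃ M, ∀ m ≥ M, P m * a N < ε / 2 := by
    have := (hPa.eventually (gt_mem_nhds (by linarith : (0:ℝ) < ε / 2)))
    exact this.exists_forall_of_atTop
  refine ⟨max N M, fun n hn => ?_⟩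
  have hnN : N ≤ n := le_trans (le_max_left _ _) hn
  have hnM : M ≤ n := le_trans (le_max_right _ _) hn
  have := key n hnN
  have h1 : a n < ε := by
    calc a n ≤ P n * a N + ∑ k ∈ Finset.Ico N n, c k := this
      _ ≤ P n * a N + ∑' k, c (k + N) := by linarith [hcsum n]
      _ < ε / 2 + ε / 2 := by have := hM n hnM; linarith
      _ = ε := by ring
  rw [Real.dist_eq]
  rw [abs_sub_comm, abs_of_nonpos (by linarith [ha n])]
  linarith

theorem halpern_asymptotic_regularity
    {X : Type*} [NormedAddCommGroup X] [NormedSpace ℝ X]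
    (C : Set X) (hC : C.Nonempty) (hconv : Convex ℝ C)
    (T : X → X) (hTmaps : Set.MapsTo T C C)
    (hT : ∀ u ∈ C, ∀ v ∈ C, ‖T u - T v‖ ≤ ‖u - v‖)
    (lam : ℕ → ℝ) (hlam : ∀ n ≥ 1, lam n ∈ Set.Icc (0:ℝ) 1)
    (x₀ : X) (hx₀ : x₀ ∈ C) (x : ℕ → X) (hx0 : x 0 = x₀)
    (hrec : ∀ n : ℕ, x (n + 1) = lam (n + 1) • x₀ + (1 - lam (n + 1)) • T (x n))
    (hlim : Filter.Tendsto lam Filter.atTop (nhds 0))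
    (hdiv : Filter.Tendsto (fun m => ∑ i ∈ Finset.Icc 1 m, lam i) Filter.atTop Filter.atTop)
    (hsum : Summable (fun n : ℕ => |lam (n + 2) - lam (n + 1)|))
    (hbound : ∃ K : ℝ, ∀ n : ℕ, ‖x n‖ ≤ K) :
    Filter.Tendsto (fun n => ‖x n - T (x n)‖) Filter.atTop (nhds 0) := by
  obtain ⟨K, hK⟩ := hbound
  -- all iterates in C
  have hmem : ∀ n, x n ∈ C := by
    intro n
    induction n with
    | zero => rw [hx0]; exact hx₀
    | succ n ih =>
      rw [hrec n]
      have h := hlam (n + 1) (by omega)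
      exact hconv hx₀ (hTmaps ih) h.1 (by linarith [h.2]) (by ring)
  -- bound on ‖x₀ - T (x n)‖
  set M : ℝ := ‖x₀‖ + (K + ‖x₀‖ + ‖T x₀‖) with hMdef
  have hM : ∀ n, ‖x₀ - T (x n)‖ ≤ M := by
    intro n
    have h1 : ‖T (x n) - T x₀‖ ≤ ‖x n - x₀‖ := hT _ (hmem n) _ hx₀
    have h2 : ‖x n - x₀‖ ≤ ‖x n‖ + ‖x₀‖ := norm_sub_le _ _
    have h3 : ‖T (x n)‖ ≤ ‖T (x n) - T x₀‖ + ‖T x₀‖ := by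
      calc ‖T (x n)‖ = ‖(T (x n) - T x₀) + T x₀‖ := by congr 1; abel
        _ ≤ ‖T (x n) - T x₀‖ + ‖T x₀‖ := norm_add_le _ _
    calc ‖x₀ - T (x n)‖ ≤ ‖x₀‖ + ‖T (x n)‖ := norm_sub_le _ _
      _ ≤ M := by rw [hMdef]; linarith [hK n]
  have hM0 : 0 ≤ M := le_trans (norm_nonneg _) (hM 0)
  -- sequences
  set a : ℕ → ℝ := fun n => ‖x (n + 1) - x n‖ with hadef
  set c : ℕ → ℝ := fun n => |lam (n + 2) - lam (n + 1)| * M with hcdef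
  set μ : ℕ → ℝ := fun n => lam (n + 1) with hμdef
  -- the recursion
  have harec : ∀ n, a (n + 1) ≤ (1 - μ (n + 1)) * a n + c n := by
    intro n
    have hdiff : x (n + 2) - x (n + 1)
        = (lam (n + 2) - lam (n + 1)) • (x₀ - T (x n))
          + (1 - lam (n + 2)) • (T (x (n + 1)) - T (x n)) := by
      rw [hrec (n + 1), hrec n]
      module
    have hlam2 := hlam (n + 2) (by omega)
    have hTn : ‖T (x (n + 1)) - T (x n)‖ ≤ ‖x (n + 1) - x n‖ := hT _ (hmem _) _ (hmem _)
    calc a (n + 1) = ‖x (n + 2) - x (n + 1)‖ := rfl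
      _ ≤ ‖(lam (n + 2) - lam (n + 1)) • (x₀ - T (x n))‖
          + ‖(1 - lam (n + 2)) • (T (x (n + 1)) - T (x n))‖ := by rw [hdiff]; exact norm_add_le _ _
      _ = |lam (n + 2) - lam (n + 1)| * ‖x₀ - T (x n)‖
          + |1 - lam (n + 2)| * ‖T (x (n + 1)) - T (x n)‖ := by
            rw [norm_smul, norm_smul, Real.norm_eq_abs, Real.norm_eq_abs]
      _ ≤ |lam (n + 2) - lam (n + 1)| * M + (1 - lam (n + 2)) * ‖x (n + 1) - x n‖ := by
            have h1 : |1 - lam (n + 2)| = 1 - lam (n + 2) := abs_of_nonneg (by linarith [hlam2.2])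
            rw [h1]
            have := mul_le_mul_of_nonneg_left (hM n) (abs_nonneg (lam (n + 2) - lam (n + 1)))
            have := mul_le_mul_of_nonneg_left hTn (by linarith [hlam2.2] : (0:ℝ) ≤ 1 - lam (n + 2))
            linarith
      _ = (1 - μ (n + 1)) * a n + c n := by rw [hμdef, hcdef, hadef]; ring
  -- divergence for μ
  have hμdiv : Tendsto (fun m => ∑ i ∈ Finset.Ioc 0 m, μ i) atTop atTop := by
    have heq : ∀ m, ∑ i ∈ Finset.Ioc 0 m, μ i = (∑ i ∈ Finset.Icc 1 (m + 1), lam i) - lam 1 := by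
      intro m
      induction m with
      | zero => simp [hμdef]
      | succ m ih =>
        rw [Finset.sum_Ioc_succ_top (Nat.zero_le _), ih,
          Finset.sum_Icc_succ_top (by omega : 1 ≤ m + 1 + 1)]
        simp only [hμdef]
        ring
    have h1 : Tendsto (fun m => (∑ i ∈ Finset.Icc 1 (m + 1), lam i) + -lam 1) atTop atTop :=
      tendsto_atTop_add_const_right _ _ (hdiv.comp (tendsto_add_atTop_nat 1))
    refine Tendsto.congr' ?_ h1
    filter_upwards with m
    rw [heq m]; ring
  -- summability of c
  have hcsum : Summable c := by
    simpa [hcdef] using hsum.mul_right M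
  -- apply aux lemma
  have haten : Tendsto a atTop (nhds 0) := by
    refine halpern_aux_tendsto a c μ (fun n => norm_nonneg _) ?_ ?_ harec ?_ hcsum hμdiv
    · intro n hn; exact (hlam (n + 1) (by omega)).1
    · intro n hn; exact (hlam (n + 1) (by omega)).2
    · intro n; exact mul_nonneg (abs_nonneg _) hM0
  -- final squeeze
  have hfinal : ∀ n, ‖x n - T (x n)‖ ≤ a n + lam (n + 1) * M := by
    intro n
    have h1 : x (n + 1) - T (x n) = lam (n + 1) • (x₀ - T (x n)) := by
      rw [hrec n]; module
    have h2 : ‖x (n + 1) - T (x n)‖ ≤ lam (n + 1) * M := by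
      rw [h1, norm_smul, Real.norm_eq_abs, abs_of_nonneg (hlam (n + 1) (by omega)).1]
      exact mul_le_mul_of_nonneg_left (hM n) (hlam (n + 1) (by omega)).1
    calc ‖x n - T (x n)‖ = ‖(x n - x (n + 1)) + (x (n + 1) - T (x n))‖ := by congr 1; abel
      _ ≤ ‖x n - x (n + 1)‖ + ‖x (n + 1) - T (x n)‖ := norm_add_le _ _
      _ ≤ a n + lam (n + 1) * M := by
          rw [hadef]
          simp only [norm_sub_rev (x n) (x (n + 1))]
          linarith
  refine squeeze_zero (fun n => norm_nonneg _) hfinal ?_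
  have h2 : Tendsto (fun n => lam (n + 1) * M) atTop (nhds 0) := by
    simpa using (hlim.comp (tendsto_add_atTop_nat 1)).mul_const M
  simpa using haten.add h2
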